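/- arXiv:2305.06619 — 5 statements merged into one kernel-verified Lean document; each statement's English description precedes it below -/
import Mathlib

section
/- The compression capacity of the model (00;C1,C2;f) equals C2. That is, the supremum, over all positive integers k and all admissible k-shot codes (φ1, φ2), of the rate k / max(⌈log|Im φ1| / C1⌉, ⌈log|Im φ2| / C2⌉) equals C2. -/
/-!
Statement 0: The compression capacity of the model (00;C1,C2;f), where the target function is
the binary arithmetic sum f(x,y) = x + y (componentwise on length-k binary vectors), equals C2.
Encoders are maps with finite image; WLOG they take values in ℕ.
-/

/-- The componentwise integer sum of two binary vectors. -/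
def vsum {k : ℕ} (x y : Fin k → Fin 2) : Fin k → ℕ := fun i => (x i : ℕ) + (y i : ℕ)

/-- The cardinality of the image of an encoding map defined on `A^k`. -/
def imCard {k : ℕ} (φ : (Fin k → Fin 2) → ℕ) : ℕ := (Finset.univ.image φ).card

/-- Admissibility for the model (00;C1,C2;f): there is a decoder that recovers `x + y`
with zero error from the two encoder outputs `φ1 x` and `φ2 y`. -/
def Admissible00 {k : ℕ} (φ1 φ2 : (Fin k → Fin 2) → ℕ) : Prop :=
  ∃ ψ : ℕ → ℕ → (Fin k → ℕ), ∀ x y : Fin k → Fin 2, ψ (φ1 x) (φ2 y) = vsum x y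

/-- The rate of a k-shot code: `k / max(⌈log|Im φ1| / C1⌉, ⌈log|Im φ2| / C2⌉)`,
logarithms in base 2. -/
noncomputable def rate00 (C1 C2 : ℝ) {k : ℕ} (φ1 φ2 : (Fin k → Fin 2) → ℕ) : ℝ :=
  (k : ℝ) /
    ((max ⌈Real.logb 2 (imCard φ1) / C1⌉ ⌈Real.logb 2 (imCard φ2) / C2⌉ : ℤ) : ℝ)

/-- Admissibility forces both encoders to be injective. -/
lemma adm_inj {k : ℕ} {φ1 φ2 : (Fin k → Fin 2) → ℕ} (h : Admissible00 φ1 φ2) :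
    Function.Injective φ1 ∧ Function.Injective φ2 := by
  obtain ⟨ψ, hψ⟩ := h
  constructor
  · intro x x' hxx'
    funext i
    have h1 := hψ x x'
    have h2 := hψ x' x'
    rw [hxx'] at h1
    have := congrFun (h1.symm.trans h2) i
    simp only [vsum] at this
    exact Fin.val_injective (Nat.add_right_cancel this)
  · intro y y' hyy'
    funext i
    have h1 := hψ y' y
    have h2 := hψ y' y'
    rw [hyy'] at h1
    have := congrFun (h1.symm.trans h2) i
    simp only [vsum] at this
    exact Fin.val_injective (Nat.add_left_cancel this)

lemma imCard_of_inj {k : ℕ} {φ : (Fin k → Fin 2) → ℕ} (h : Function.Injective φ) :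
    imCard φ = 2 ^ k := by
  rw [imCard, Finset.card_image_of_injective _ h, Finset.card_univ, Fintype.card_fun]
  simp

lemma logb_imCard {k : ℕ} {φ : (Fin k → Fin 2) → ℕ} (h : Function.Injective φ) :
    Real.logb 2 (imCard φ) = k := by
  rw [imCard_of_inj h]
  push_cast
  rw [Real.logb_pow]
  simp [Real.logb_self_eq_one]

lemma rate_eq (C1 C2 : ℝ) (hC : C2 ≤ C1) (hC2 : 0 < C2) {k : ℕ}
    {φ1 φ2 : (Fin k → Fin 2) → ℕ} (h1 : Function.Injective φ1)
    (h2 : Function.Injective φ2) :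
    rate00 C1 C2 φ1 φ2 = (k : ℝ) / ((⌈(k : ℝ) / C2⌉ : ℤ) : ℝ) := by
  have hC1 : 0 < C1 := lt_of_lt_of_le hC2 hC
  have hle : (k : ℝ) / C1 ≤ (k : ℝ) / C2 :=
    div_le_div_of_nonneg_left (by positivity) hC2 hC
  rw [rate00, logb_imCard h1, logb_imCard h2, max_eq_right (Int.ceil_le_ceil hle)]

lemma ceil_pos' (C2 : ℝ) (hC2 : 0 < C2) {k : ℕ} (hk : 0 < k) :
    (0 : ℝ) < ((⌈(k : ℝ) / C2⌉ : ℤ) : ℝ) := by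
  have : (0 : ℝ) < (k : ℝ) / C2 := by positivity
  exact_mod_cast Int.ceil_pos.2 this

lemma rate_le (C2 : ℝ) (hC2 : 0 < C2) {k : ℕ} (hk : 0 < k) :
    (k : ℝ) / ((⌈(k : ℝ) / C2⌉ : ℤ) : ℝ) ≤ C2 := by
  have hm := ceil_pos' C2 hC2 hk
  rw [div_le_iff₀ hm]
  calc (k : ℝ) = C2 * ((k : ℝ) / C2) := by field_simp
    _ ≤ C2 * ((⌈(k : ℝ) / C2⌉ : ℤ) : ℝ) :=
        mul_le_mul_of_nonneg_left (Int.le_ceil _) hC2.le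

/-- For every k there is an injective encoder giving an admissible code. -/
lemma exists_code (k : ℕ) : ∃ φ : (Fin k → Fin 2) → ℕ,
    Function.Injective φ ∧ Admissible00 φ φ := by
  set N := Fintype.card (Fin k → Fin 2) with hN
  have hNpos : 0 < N := Fintype.card_pos
  let e := Fintype.equivFin (Fin k → Fin 2)
  refine ⟨fun x => (e x : ℕ), ?_, ?_⟩
  · intro x y hxy
    have : e x = e y := Fin.ext hxy
    exact e.injective this
  · refine ⟨fun n m => vsum (e.symm ⟨n % N, Nat.mod_lt _ hNpos⟩)
      (e.symm ⟨m % N, Nat.mod_lt _ hNpos⟩), ?_⟩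
    intro x y
    have hx : (e x : ℕ) % N = (e x : ℕ) := Nat.mod_eq_of_lt (e x).isLt
    have hy : (e y : ℕ) % N = (e y : ℕ) := Nat.mod_eq_of_lt (e y).isLt
    simp only [hx, hy, Fin.eta, Equiv.symm_apply_apply]

theorem capacity_00 (C1 C2 : ℝ) (hC : C2 ≤ C1) (hC2 : 0 < C2) :
    sSup {r : ℝ | ∃ (k : ℕ), 0 < k ∧ ∃ φ1 φ2 : (Fin k → Fin 2) → ℕ,
      Admissible00 φ1 φ2 ∧ r = rate00 C1 C2 φ1 φ2} = C2 := by
  set S := {r : ℝ | ∃ (k : ℕ), 0 < k ∧ ∃ φ1 φ2 : (Fin k → Fin 2) → ℕ,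
      Admissible00 φ1 φ2 ∧ r = rate00 C1 C2 φ1 φ2} with hS
  have hub : ∀ r ∈ S, r ≤ C2 := by
    rintro r ⟨k, hk, φ1, φ2, hadm, rfl⟩
    obtain ⟨h1, h2⟩ := adm_inj hadm
    rw [rate_eq C1 C2 hC hC2 h1 h2]
    exact rate_le C2 hC2 hk
  have hbdd : BddAbove S := ⟨C2, hub⟩
  -- the canonical rate for each k belongs to S
  have hmem : ∀ k : ℕ, 0 < k → ((k : ℝ) / ((⌈(k : ℝ) / C2⌉ : ℤ) : ℝ)) ∈ S := by
    intro k hk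
    obtain ⟨φ, hinj, hadm⟩ := exists_code k
    exact ⟨k, hk, φ, φ, hadm, (rate_eq C1 C2 hC hC2 hinj hinj).symm⟩
  refine le_antisymm (Real.sSup_le hub hC2.le) ?_
  by_contra hlt
  push_neg at hlt
  set s := sSup S with hs
  have hsle : ∀ k : ℕ, 0 < k → (k : ℝ) / ((⌈(k : ℝ) / C2⌉ : ℤ) : ℝ) ≤ s :=
    fun k hk => le_csSup hbdd (hmem k hk)
  -- s ≥ r(1) > 0
  have hspos : 0 < s := by
    have h1 := hsle 1 one_pos
    have := ceil_pos' C2 hC2 (k := 1) one_pos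
    refine lt_of_lt_of_le ?_ h1
    push_cast at this ⊢
    positivity
  -- choose k large
  obtain ⟨k, hk⟩ := exists_nat_gt (max 1 (s * C2 / (C2 - s)))
  have hk1 : (1 : ℝ) ≤ (k : ℝ) := le_of_lt (lt_of_le_of_lt (le_max_left _ _) hk)
  have hkpos : 0 < k := by exact_mod_cast lt_of_lt_of_le zero_lt_one hk1
  have hkgt : s * C2 / (C2 - s) < (k : ℝ) := lt_of_le_of_lt (le_max_right _ _) hk
  have hCs : 0 < C2 - s := sub_pos.2 hlt
  -- key: k * C2 / (k + C2) > s
  have hkey : s < (k : ℝ) * C2 / ((k : ℝ) + C2) := by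
    rw [lt_div_iff₀ (by positivity)]
    have : s * C2 < (k : ℝ) * (C2 - s) := by
      rwa [div_lt_iff₀ hCs] at hkgt
    nlinarith
  -- r(k) > k*C2/(k+C2)
  have hm := ceil_pos' C2 hC2 hkpos
  have hmlt : ((⌈(k : ℝ) / C2⌉ : ℤ) : ℝ) < ((k : ℝ) + C2) / C2 := by
    have := Int.ceil_lt_add_one ((k : ℝ) / C2)
    calc ((⌈(k : ℝ) / C2⌉ : ℤ) : ℝ) < (k : ℝ) / C2 + 1 := this
      _ = ((k : ℝ) + C2) / C2 := by field_simp
  have hrgt : (k : ℝ) * C2 / ((k : ℝ) + C2) < (k : ℝ) / ((⌈(k : ℝ) / C2⌉ : ℤ) : ℝ) := by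
    have h1 : (k : ℝ) / (((k : ℝ) + C2) / C2) < (k : ℝ) / ((⌈(k : ℝ) / C2⌉ : ℤ) : ℝ) :=
      div_lt_div_of_pos_left (by positivity) hm hmlt
    calc (k : ℝ) * C2 / ((k : ℝ) + C2) = (k : ℝ) / (((k : ℝ) + C2) / C2) := by
          rw [div_div_eq_mul_div]
      _ < _ := h1
  exact absurd (hsle k hkpos) (not_le.2 (lt_trans hkey hrgt))
end

section
/- Let k be a positive integer and let L be a subset of A^k with |L| = ℓ. Then |A^k + L| ≥ 2^k · ℓ^(log 3 − 1), where the exponent log 3 − 1 uses the base-2 logarithm (and 0^(log 3 − 1) is interpreted as 0). -/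
/-- The sumset `M + L = {x + y : x ∈ M, y ∈ L}` (componentwise integer sums). -/
def sumSet {k : ℕ} (M L : Finset (Fin k → Fin 2)) : Finset (Fin k → ℕ) :=
  (M ×ˢ L).image fun p => vsum p.1 p.2

namespace Statement13Aux

open Real Set

open Real Set

noncomputable def cc : ℝ := Real.logb 2 3 - 1

lemma two_rpow_cc : (2:ℝ) ^ cc = 3/2 := by
  rw [cc, Real.rpow_sub two_pos, Real.rpow_logb two_pos (by norm_num) (by norm_num),
    Real.rpow_one]

lemma cc_pos : 0 < cc := by
  have h : (2:ℝ) ^ (0:ℝ) < 2 ^ cc := by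
    rw [two_rpow_cc, Real.rpow_zero]; norm_num
  exact (Real.rpow_lt_rpow_left_iff one_lt_two).mp h

lemma cc_lt_one : cc < 1 := by
  have h : (2:ℝ) ^ cc < 2 ^ (1:ℝ) := by
    rw [two_rpow_cc, Real.rpow_one]; norm_num
  exact (Real.rpow_lt_rpow_left_iff one_lt_two).mp h

/-- the function `t ↦ t^c + 2 - 2*(1+t)^c` is concave on `[0,1]`. -/
lemma concave_g : ConcaveOn ℝ (Icc (0:ℝ) 1) (fun t => t ^ cc + 2 - 2*(1+t) ^ cc) := by
  have hint : interior (Icc (0:ℝ) 1) = Ioo 0 1 := interior_Icc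
  apply concaveOn_of_hasDerivWithinAt2_nonpos (f' := fun t =>
      cc * t ^ (cc - 1) - 2 * cc * (1+t) ^ (cc - 1))
    (f'' := fun t => cc * (cc-1) * t ^ (cc - 1 - 1) - 2 * cc * ((cc-1) * (1+t) ^ (cc-1-1)))
    (convex_Icc 0 1)
  · -- continuity
    apply ContinuousOn.sub
    · apply ContinuousOn.add
      · exact (Real.continuous_rpow_const cc_pos.le).continuousOn
      · exact continuousOn_const
    · exact (continuousOn_const.mul (((Real.continuous_rpow_const cc_pos.le).comp
        (continuous_const.add continuous_id)).continuousOn))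
  · intro x hx
    rw [hint] at hx
    have hx1 : (0:ℝ) < 1 + x := by linarith [hx.1]
    have h1 : HasDerivAt (fun t:ℝ => t ^ cc) (cc * x ^ (cc-1)) x :=
      Real.hasDerivAt_rpow_const (Or.inl (ne_of_gt hx.1))
    have h2 : HasDerivAt (fun t:ℝ => (1+t) ^ cc) (cc * (1+x) ^ (cc-1)) x := by
      have := HasDerivAt.comp x
        (Real.hasDerivAt_rpow_const (p := cc) (Or.inl (ne_of_gt hx1)))
        ((hasDerivAt_id x).const_add 1)
      simpa [Function.comp_def] using this
    have H := (h1.add_const 2).sub (h2.const_mul 2)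
    apply HasDerivAt.hasDerivWithinAt
    convert H using 1
    · funext t; simp only [Pi.sub_apply]
    · ring
  · intro x hx
    rw [hint] at hx
    have hx1 : (0:ℝ) < 1 + x := by linarith [hx.1]
    have h1 : HasDerivAt (fun t:ℝ => cc * t ^ (cc-1)) (cc * ((cc-1) * x ^ (cc-1-1))) x :=
      (Real.hasDerivAt_rpow_const (Or.inl (ne_of_gt hx.1))).const_mul cc
    have h2 : HasDerivAt (fun t:ℝ => (1+t) ^ (cc-1)) ((cc-1) * (1+x) ^ (cc-1-1)) x := by
      have := HasDerivAt.comp x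
        (Real.hasDerivAt_rpow_const (p := cc-1) (Or.inl (ne_of_gt hx1)))
        ((hasDerivAt_id x).const_add 1)
      simpa [Function.comp_def] using this
    have H := h1.sub (h2.const_mul (2*cc))
    apply HasDerivAt.hasDerivWithinAt
    convert H using 1
    · funext t; simp only [Pi.sub_apply]
    · ring
  · intro x hx
    rw [hint] at hx
    obtain ⟨hx0, hx1⟩ := hx
    have key : 2 * (1+x) ^ (cc-1-1) ≤ x ^ (cc-1-1) := by
      have hA : (0:ℝ) < x ^ (2 - cc) := Real.rpow_pos_of_pos hx0 _
      have hB : (0:ℝ) < (1+x) ^ (2 - cc) := Real.rpow_pos_of_pos (by linarith) _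
      have h1 : 2 * x ^ (2-cc) ≤ (1+x) ^ (2-cc) := by
        have e1 : (2:ℝ) * x ^ (2-cc) ≤ 2 ^ (2-cc) * x ^ (2-cc) := by
          apply mul_le_mul_of_nonneg_right _ hA.le
          calc (2:ℝ) = 2 ^ (1:ℝ) := (Real.rpow_one 2).symm
            _ ≤ 2 ^ (2-cc) := Real.rpow_le_rpow_of_exponent_le one_le_two (by linarith [cc_lt_one])
        have e2 : (2:ℝ) ^ (2-cc) * x ^ (2-cc) = (2*x) ^ (2-cc) :=
          (Real.mul_rpow (by norm_num) hx0.le).symm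
        have e3 : ((2:ℝ)*x) ^ (2-cc) ≤ (1+x) ^ (2-cc) :=
          Real.rpow_le_rpow (by linarith) (by linarith) (by linarith [cc_lt_one])
        linarith
      have ex : x ^ (cc-1-1) = (x ^ (2-cc))⁻¹ := by
        rw [show cc-1-1 = -(2-cc) by ring, Real.rpow_neg hx0.le]
      have ey : (1+x) ^ (cc-1-1) = ((1+x) ^ (2-cc))⁻¹ := by
        rw [show cc-1-1 = -(2-cc) by ring, Real.rpow_neg (by linarith)]
      rw [ex, ey]
      rw [show (2:ℝ) * ((1+x)^(2-cc))⁻¹ = 2 / ((1+x)^(2-cc)) by ring,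
        show (x^(2-cc))⁻¹ = 1 / (x^(2-cc)) by ring, div_le_div_iff₀ hB hA]
      linarith
    have hc1 : cc - 1 < 0 := by linarith [cc_lt_one]
    have h2 : 0 ≤ x ^ (cc-1-1) - 2 * (1+x) ^ (cc-1-1) := by linarith
    have heq : cc * (cc-1) * x ^ (cc-1-1) - 2*cc*((cc-1) * (1+x)^(cc-1-1))
        = (cc*(cc-1)) * (x ^ (cc-1-1) - 2 * (1+x) ^ (cc-1-1)) := by ring
    rw [heq]
    apply mul_nonpos_of_nonpos_of_nonneg _ h2
    exact mul_nonpos_of_nonneg_of_nonpos cc_pos.le (by linarith)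

lemma key_ineq {a b : ℝ} (ha : 0 ≤ a) (hab : a ≤ b) :
    2 * (a + b) ^ cc ≤ a ^ cc + 2 * b ^ cc := by
  rcases eq_or_lt_of_le (ha.trans hab) with hb | hb
  · have ha0 : a = 0 := le_antisymm (hab.trans hb.symm.le) ha
    rw [ha0, ← hb]
    simp [Real.zero_rpow cc_pos.ne']
  · set t := a / b with ht
    have ht0 : 0 ≤ t := div_nonneg ha hb.le
    have ht1 : t ≤ 1 := div_le_one_of_le₀ hab hb.le
    have hcon := concave_g
    have h0 : (0:ℝ) ∈ Icc (0:ℝ) 1 := by constructor <;> norm_num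
    have h1 : (1:ℝ) ∈ Icc (0:ℝ) 1 := by constructor <;> norm_num
    have := hcon.2 h0 h1 (by linarith : (0:ℝ) ≤ 1 - t) ht0 (by ring)
    simp only [smul_eq_mul, mul_zero, mul_one, zero_add] at this
    have hg0 : (0:ℝ) ^ cc + 2 - 2*(1+(0:ℝ)) ^ cc = 0 := by
      rw [Real.zero_rpow cc_pos.ne']; norm_num
    have hg1 : (1:ℝ) ^ cc + 2 - 2*(1+(1:ℝ)) ^ cc = 0 := by
      norm_num [Real.one_rpow, two_rpow_cc]
    rw [hg0, hg1] at this
    have hft : 2 * (1 + t) ^ cc ≤ t ^ cc + 2 := by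
      simp only [mul_zero, add_zero] at this; linarith
    -- multiply by b ^ cc
    have hbpos : (0:ℝ) < b ^ cc := Real.rpow_pos_of_pos hb _
    have hmul := mul_le_mul_of_nonneg_left hft hbpos.le
    have hbne : b ≠ 0 := hb.ne'
    have e1 : b ^ cc * (2 * (1+t) ^ cc) = 2 * (a + b) ^ cc := by
      calc b ^ cc * (2 * (1+t) ^ cc) = 2 * (b ^ cc * (1+t) ^ cc) := by ring
        _ = 2 * ((b * (1+t)) ^ cc) := by rw [Real.mul_rpow hb.le (by linarith)]
        _ = 2 * (a+b) ^ cc := by rw [show b * (1+t) = a + b from by rw [ht, mul_add, mul_one, mul_div_assoc', mul_div_cancel_left₀ a hbne]; ring]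
    have e2 : b ^ cc * (t ^ cc + 2) = a ^ cc + 2 * b ^ cc := by
      calc b ^ cc * (t ^ cc + 2) = (b ^ cc * t ^ cc) + 2 * b ^ cc := by ring
        _ = (b * t) ^ cc + 2 * b ^ cc := by rw [Real.mul_rpow hb.le ht0]
        _ = a ^ cc + 2 * b ^ cc := by rw [show b * t = a from by rw [ht, mul_div_assoc', mul_div_cancel_left₀ a hbne]]
    rw [e1, e2] at hmul
    exact hmul

open Finset

variable {k : ℕ}

/-- zero out coordinates outside `U` -/
def maskf (U : Finset (Fin k)) (y : Fin k → Fin 2) : Fin k → Fin 2 :=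
  fun i => if i ∈ U then y i else 0

def mask (U : Finset (Fin k)) (L : Finset (Fin k → Fin 2)) : Finset (Fin k → Fin 2) :=
  L.image (maskf U)

lemma mask_zero_outside {U : Finset (Fin k)} {L : Finset (Fin k → Fin 2)}
    {w : Fin k → Fin 2} (hw : w ∈ mask U L) {i : Fin k} (hi : i ∉ U) : w i = 0 := by
  obtain ⟨y, _, rfl⟩ := Finset.mem_image.mp hw
  simp [maskf, hi]

lemma mask_mono {U : Finset (Fin k)} {L L' : Finset (Fin k → Fin 2)} (h : L' ⊆ L) :
    mask U L' ⊆ mask U L := Finset.image_subset_image h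

lemma mask_card_le_one (L : Finset (Fin k → Fin 2)) : (mask ∅ L).card ≤ 1 := by
  apply Finset.card_le_one.mpr
  intro w hw w' hw'
  obtain ⟨y, _, rfl⟩ := Finset.mem_image.mp hw
  obtain ⟨y', _, rfl⟩ := Finset.mem_image.mp hw'
  funext i
  simp [maskf]

lemma fin_two_cases : ∀ b : Fin 2, b = 0 ∨ b = 1 := by decide

lemma fin_two_ne : ∀ x y : Fin 2, x ≠ y → (x : ℕ) + (y : ℕ) = 1 := by decide

lemma fin_two_sub : ∀ y : Fin 2, ((1 - y : Fin 2) : ℕ) + (y : ℕ) = 1 := by decide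

lemma filter_union_filter (a : Fin k) (L : Finset (Fin k → Fin 2)) :
    L.filter (fun y => y a = 0) ∪ L.filter (fun y => y a = 1) = L := by
  rw [← Finset.filter_or]
  apply Finset.filter_true_of_mem
  intro y _
  exact fin_two_cases (y a)

/-- splitting lemma -/
lemma mask_insert_card {a : Fin k} {U : Finset (Fin k)} (ha : a ∉ U)
    (L : Finset (Fin k → Fin 2)) :
    (mask (insert a U) L).card
      = (mask U (L.filter (fun y => y a = 0))).card
        + (mask U (L.filter (fun y => y a = 1))).card := by
  set L0 := L.filter (fun y => y a = 0) with hL0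
  set L1 := L.filter (fun y => y a = 1) with hL1
  have hunion : mask (insert a U) L = mask (insert a U) L0 ∪ mask (insert a U) L1 := by
    rw [mask, mask, mask, ← Finset.image_union, filter_union_filter]
  have hdisj : Disjoint (mask (insert a U) L0) (mask (insert a U) L1) := by
    rw [Finset.disjoint_left]
    intro w hw0 hw1
    obtain ⟨y, hy, rfl⟩ := Finset.mem_image.mp hw0
    obtain ⟨y', hy', heq⟩ := Finset.mem_image.mp hw1
    have h0 : y a = 0 := (Finset.mem_filter.mp hy).2
    have h1 : y' a = 1 := (Finset.mem_filter.mp hy').2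
    have := congrFun heq a
    simp only [maskf, Finset.mem_insert_self, if_pos] at this
    rw [h0, h1] at this
    exact absurd this (by decide)
  have h0eq : mask (insert a U) L0 = mask U L0 := by
    apply Finset.image_congr
    intro y hy
    have h0 : y a = 0 := (Finset.mem_filter.mp (Finset.mem_coe.mp hy)).2
    funext i
    by_cases hia : i = a
    · subst hia
      simp [maskf, ha, h0]
    · simp [maskf, Finset.mem_insert, hia]
  have h1card : (mask (insert a U) L1).card = (mask U L1).card := by
    have h1eq : mask (insert a U) L1 = (mask U L1).image (fun w => Function.update w a 1) := by
      rw [mask, mask, Finset.image_image]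
      apply Finset.image_congr
      intro y hy
      have h1 : y a = 1 := (Finset.mem_filter.mp (Finset.mem_coe.mp hy)).2
      funext i
      by_cases hia : i = a
      · subst hia
        simp [maskf, Function.update_self, h1]
      · simp [maskf, Function.comp, Function.update_of_ne hia, Finset.mem_insert, hia]
    rw [h1eq]
    apply Finset.card_image_of_injOn
    intro w hw w' hw' h
    funext i
    by_cases hia : i = a
    · subst hia
      rw [mask_zero_outside (Finset.mem_coe.mp hw) ha, mask_zero_outside (Finset.mem_coe.mp hw') ha]
    · have := congrFun h i
      simpa only [Function.update_of_ne hia] using this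
  rw [hunion, Finset.card_union_of_disjoint hdisj, h0eq, h1card]

lemma mask_powerset_lb (s : Finset (Fin k)) : ∀ L : Finset (Fin k → Fin 2),
    (2:ℝ) ^ s.card * ((mask s L).card : ℝ) ^ cc ≤ ∑ U ∈ s.powerset, ((mask U L).card : ℝ) := by
  induction s using Finset.induction_on with
  | empty =>
    intro L
    rw [Finset.powerset_empty, Finset.sum_singleton, Finset.card_empty, pow_zero, one_mul]
    rcases Nat.eq_zero_or_pos (mask ∅ L).card with h | h
    · rw [h]
      simp [Real.zero_rpow cc_pos.ne']
    · have h1 : (mask ∅ L).card = 1 := le_antisymm (mask_card_le_one L) h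
      rw [h1]
      simp [Real.one_rpow]
  | @insert a s ha ih =>
    intro L
    set L0 := L.filter (fun y => y a = 0) with hL0
    set L1 := L.filter (fun y => y a = 1) with hL1
    have hsplit : ∀ U : Finset (Fin k), U ⊆ s →
        (mask (insert a U) L).card = (mask U L0).card + (mask U L1).card :=
      fun U hU => mask_insert_card (fun haU => ha (hU haU)) L
    rw [Finset.sum_powerset_insert ha]
    have h2 : ∑ U ∈ s.powerset, ((mask (insert a U) L).card : ℝ)
        = ∑ U ∈ s.powerset, ((mask U L0).card : ℝ)
          + ∑ U ∈ s.powerset, ((mask U L1).card : ℝ) := by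
      rw [← Finset.sum_add_distrib]
      apply Finset.sum_congr rfl
      intro U hU
      rw [hsplit U (Finset.mem_powerset.mp hU)]
      push_cast
      ring
    rw [h2]
    have ih0 := ih L0
    have ih1 := ih L1
    have hm0 : ∑ U ∈ s.powerset, ((mask U L0).card : ℝ)
        ≤ ∑ U ∈ s.powerset, ((mask U L).card : ℝ) := by
      apply Finset.sum_le_sum
      intro U _
      exact_mod_cast Finset.card_le_card (mask_mono (Finset.filter_subset _ _))
    have hm1 : ∑ U ∈ s.powerset, ((mask U L1).card : ℝ)
        ≤ ∑ U ∈ s.powerset, ((mask U L).card : ℝ) := by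
      apply Finset.sum_le_sum
      intro U _
      exact_mod_cast Finset.card_le_card (mask_mono (Finset.filter_subset _ _))
    set α := ((mask s L0).card : ℝ) with hαd
    set β := ((mask s L1).card : ℝ) with hβd
    have hα : 0 ≤ α := Nat.cast_nonneg _
    have hβ : 0 ≤ β := Nat.cast_nonneg _
    have hcard : ((mask (insert a s) L).card : ℝ) = α + β := by
      rw [hsplit s (subset_refl s)]
      push_cast
      rfl
    rw [hcard, Finset.card_insert_of_notMem ha, pow_succ]
    have hpw : (0:ℝ) ≤ 2 ^ s.card := by positivity
    rcases le_total α β with hle | hle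
    · have k1 := key_ineq hα hle
      have k2 := mul_le_mul_of_nonneg_left k1 hpw
      have e0 : (2:ℝ) ^ s.card * 2 * (α + β) ^ cc
          = 2 ^ s.card * (2 * (α + β) ^ cc) := by ring
      have e1 : (2:ℝ) ^ s.card * (α ^ cc + 2 * β ^ cc)
          = 2 ^ s.card * α ^ cc + 2 ^ s.card * β ^ cc + 2 ^ s.card * β ^ cc := by ring
      linarith [ih0, ih1, hm1, k2]
    · have k1 := key_ineq hβ hle
      have k2 := mul_le_mul_of_nonneg_left k1 hpw
      have e0 : (2:ℝ) ^ s.card * 2 * (α + β) ^ cc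
          = 2 ^ s.card * (2 * (β + α) ^ cc) := by ring
      have e1 : (2:ℝ) ^ s.card * (β ^ cc + 2 * α ^ cc)
          = 2 ^ s.card * β ^ cc + 2 ^ s.card * α ^ cc + 2 ^ s.card * α ^ cc := by ring
      linarith [ih0, ih1, hm0, k2]

def embf (U : Finset (Fin k)) (w : Fin k → Fin 2) : Fin k → ℕ :=
  fun i => if i ∈ U then 2 * (w i : ℕ) else 1

lemma embf_mem_iff (U : Finset (Fin k)) (w : Fin k → Fin 2) (i : Fin k) :
    i ∈ U ↔ embf U w i ≠ 1 := by
  by_cases h : i ∈ U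
  · have h2 : (w i : ℕ) ≤ 1 := Nat.lt_succ_iff.mp (w i).isLt
    simp only [embf, h, if_true, true_iff, ne_eq]
    omega
  · simp [embf, h]

lemma sumSet_eq_biUnion (L : Finset (Fin k → Fin 2)) :
    sumSet Finset.univ L
      = (Finset.univ : Finset (Fin k)).powerset.biUnion
          (fun U => (mask U L).image (embf U)) := by
  ext z
  simp only [sumSet, Finset.mem_image, Finset.mem_biUnion, Finset.mem_product,
    Finset.mem_powerset]
  constructor
  · rintro ⟨⟨x, y⟩, ⟨_, hy⟩, rfl⟩
    refine ⟨Finset.univ.filter (fun i => x i = y i), Finset.subset_univ _,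
      maskf (Finset.univ.filter (fun i => x i = y i)) y,
      Finset.mem_image.mpr ⟨y, hy, rfl⟩, ?_⟩
    funext i
    by_cases h : x i = y i
    · have hi : i ∈ Finset.univ.filter (fun i => x i = y i) := by
        simp [h]
      simp only [embf, maskf, hi, if_pos]
      simp only [vsum, h]
      ring
    · have hi : i ∉ Finset.univ.filter (fun i => x i = y i) := by
        simp [h]
      simp only [embf, maskf, hi, if_neg, not_false_iff]
      simp only [vsum]
      exact (fin_two_ne (x i) (y i) h).symm
  · rintro ⟨U, -, w, hw, rfl⟩
    obtain ⟨y, hy, rfl⟩ := Finset.mem_image.mp hw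
    refine ⟨(fun i => if i ∈ U then y i else 1 - y i, y), ⟨Finset.mem_univ _, hy⟩, ?_⟩
    funext i
    by_cases h : i ∈ U
    · simp only [vsum, embf, maskf, h, if_pos]
      ring
    · simp only [vsum, embf, maskf, h, if_neg, not_false_iff]
      exact fin_two_sub (y i)

lemma count_eq (L : Finset (Fin k → Fin 2)) :
    (sumSet Finset.univ L).card
      = ∑ U ∈ (Finset.univ : Finset (Fin k)).powerset, (mask U L).card := by
  rw [sumSet_eq_biUnion, Finset.card_biUnion]
  · apply Finset.sum_congr rfl
    intro U _
    apply Finset.card_image_of_injOn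
    intro w hw w' hw' h
    funext i
    by_cases hi : i ∈ U
    · have := congrFun h i
      simp only [embf, hi, if_pos] at this
      have h2 : (w i : ℕ) = (w' i : ℕ) := by omega
      exact Fin.ext h2
    · rw [mask_zero_outside hw hi, mask_zero_outside hw' hi]
  · intro U _ V _ hUV
    rw [Function.onFun, Finset.disjoint_left]
    intro z hzU hzV
    obtain ⟨w, _, rfl⟩ := Finset.mem_image.mp hzU
    obtain ⟨w', _, heq⟩ := Finset.mem_image.mp hzV
    apply hUV
    ext i
    rw [embf_mem_iff U w i, embf_mem_iff V w', heq]

lemma mask_univ (L : Finset (Fin k → Fin 2)) : mask Finset.univ L = L := by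
  have h : maskf (Finset.univ : Finset (Fin k)) = id := by
    funext y i
    simp [maskf]
  rw [mask, h, Finset.image_id]

end Statement13Aux

open Statement13Aux in
theorem sumSet_card_lower_bound (k : ℕ) (hk : 0 < k) (L : Finset (Fin k → Fin 2)) :
    (2 : ℝ) ^ k * (L.card : ℝ) ^ (Real.logb 2 3 - 1) ≤
      ((sumSet (Finset.univ : Finset (Fin k → Fin 2)) L).card : ℝ) := by
  have h1 := mask_powerset_lb (Finset.univ : Finset (Fin k)) L
  rw [mask_univ, Finset.card_univ, Fintype.card_fin] at h1
  have h3 := count_eq L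
  have h4 : ((sumSet (Finset.univ : Finset (Fin k → Fin 2)) L).card : ℝ)
      = ∑ U ∈ (Finset.univ : Finset (Fin k)).powerset, ((mask U L).card : ℝ) := by
    rw [h3]
    push_cast
    rfl
  rw [h4]
  exact h1
end

section
/- Let ℓ_a and ℓ_b be nonnegative integers with ℓ_a ≥ ℓ_b and set ℓ = ℓ_a + ℓ_b. Then 2·ℓ_a^(log 3 − 1) + ℓ_b^(log 3 − 1) ≥ 2·ℓ^(log 3 − 1), where the exponent log 3 − 1 uses the base-2 logarithm (and 0^(log 3 − 1) is interpreted as 0). -/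
/-!
Statement 14: Let ℓ_a and ℓ_b be nonnegative integers with ℓ_a ≥ ℓ_b and set ℓ = ℓ_a + ℓ_b.
Then 2·ℓ_a^(log 3 − 1) + ℓ_b^(log 3 − 1) ≥ 2·ℓ^(log 3 − 1), where the exponent log 3 − 1 uses
the base-2 logarithm (real power; 0^(log 3 − 1) = 0 since log 3 − 1 > 0).
-/

open Real Set

lemma g_convex {p : ℝ} (hp0 : 0 < p) (hp1 : p ≤ 1) :
    ConvexOn ℝ (Icc (0:ℝ) 1) (fun t : ℝ => 2 * (1 + t) ^ p - t ^ p) := by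
  have hint : interior (Icc (0:ℝ) 1) = Ioo (0:ℝ) 1 := interior_Icc
  apply convexOn_of_hasDerivWithinAt2_nonneg (convex_Icc 0 1)
    (f' := fun t => 2 * (p * (1 + t) ^ (p - 1)) - p * t ^ (p - 1))
    (f'' := fun t => 2 * (p * ((p - 1) * (1 + t) ^ (p - 2))) - p * ((p - 1) * t ^ (p - 2)))
  · -- continuity
    apply ContinuousOn.sub
    · exact (continuous_const.mul ((Real.continuous_rpow_const hp0.le).comp
        (continuous_const.add continuous_id))).continuousOn
    · exact (Real.continuous_rpow_const hp0.le).continuousOn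
  · rintro x hx
    rw [hint] at hx ⊢
    obtain ⟨hx0, hx1⟩ := hx
    have h1 : HasDerivAt (fun t : ℝ => (1 + t) ^ p) (p * (1 + x) ^ (p - 1) * 1) x := by
      exact (Real.hasDerivAt_rpow_const (Or.inl (by positivity))).comp x
        ((hasDerivAt_id x).const_add 1)
    have h2 : HasDerivAt (fun t : ℝ => t ^ p) (p * x ^ (p - 1)) x :=
      Real.hasDerivAt_rpow_const (Or.inl hx0.ne')
    have := ((h1.const_mul 2).sub h2)
    simp only [mul_one] at this
    exact this.hasDerivWithinAt
  · rintro x hx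
    rw [hint] at hx ⊢
    obtain ⟨hx0, hx1⟩ := hx
    have h1 : HasDerivAt (fun t : ℝ => p * (1 + t) ^ (p - 1))
        (p * ((p - 1) * (1 + x) ^ (p - 1 - 1) * 1)) x := by
      exact (((Real.hasDerivAt_rpow_const (p := p - 1) (Or.inl (by positivity))).comp x
        ((hasDerivAt_id x).const_add 1))).const_mul p
    have h2 : HasDerivAt (fun t : ℝ => p * t ^ (p - 1)) (p * ((p - 1) * x ^ (p - 1 - 1))) x :=
      (Real.hasDerivAt_rpow_const (Or.inl hx0.ne')).const_mul p
    have h3 := (h1.const_mul 2).sub h2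
    have e : p - 1 - 1 = p - 2 := by ring
    rw [e] at h1 h2 h3
    simp only [mul_one] at h3
    exact h3.hasDerivWithinAt
  · rintro x hx
    rw [hint] at hx
    obtain ⟨hx0, hx1⟩ := hx
    have key : 2 * (1 + x) ^ (p - 2) ≤ x ^ (p - 2) := by
      have h2x : (2 * x) ≤ 1 + x := by linarith
      have hb : (1 + x) ^ (p - 2) ≤ (2 * x) ^ (p - 2) :=
        Real.rpow_le_rpow_of_nonpos (by positivity) h2x (by linarith)
      have hm : (2 * x) ^ (p - 2) = 2 ^ (p - 2) * x ^ (p - 2) :=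
        Real.mul_rpow (by norm_num) hx0.le
      have h21 : (2:ℝ) * 2 ^ (p - 2) = 2 ^ (p - 1) := by
        rw [show p - 1 = p - 2 + 1 by ring, Real.rpow_add_one (by norm_num : (2:ℝ) ≠ 0)]
        ring
      have hle1 : (2:ℝ) ^ (p - 1) ≤ 1 :=
        Real.rpow_le_one_of_one_le_of_nonpos (by norm_num) (by linarith)
      calc 2 * (1 + x) ^ (p - 2) ≤ 2 * (2 ^ (p - 2) * x ^ (p - 2)) := by
            rw [← hm]; linarith
        _ = 2 ^ (p - 1) * x ^ (p - 2) := by rw [← h21]; ring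
        _ ≤ 1 * x ^ (p - 2) := by
            apply mul_le_mul_of_nonneg_right hle1 (by positivity)
        _ = x ^ (p - 2) := one_mul _
    have hxp : (0:ℝ) ≤ x ^ (p - 2) - 2 * (1 + x) ^ (p - 2) := by linarith
    have : 2 * (p * ((p - 1) * (1 + x) ^ (p - 2))) - p * ((p - 1) * x ^ (p - 2))
        = p * (1 - p) * (x ^ (p - 2) - 2 * (1 + x) ^ (p - 2)) := by ring
    rw [this]
    have : 0 ≤ p * (1 - p) := mul_nonneg hp0.le (by linarith)
    positivity

lemma g_le {p : ℝ} (hp0 : 0 < p) (hp1 : p ≤ 1) (hp2 : (2:ℝ) ^ p ≤ 3 / 2)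
    {t : ℝ} (ht : t ∈ Icc (0:ℝ) 1) :
    2 * (1 + t) ^ p - t ^ p ≤ 2 := by
  have hconv := g_convex hp0 hp1
  have hseg : t ∈ segment ℝ (0:ℝ) 1 := by
    rw [segment_eq_Icc (by norm_num : (0:ℝ) ≤ 1)]; exact ht
  have := hconv.le_on_segment (x := 0) (y := 1) (left_mem_Icc.mpr (by norm_num))
    (right_mem_Icc.mpr (by norm_num)) hseg
  have h0 : 2 * ((1:ℝ) + 0) ^ p - (0:ℝ) ^ p = 2 := by
    rw [Real.zero_rpow hp0.ne']; norm_num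
  have h1 : 2 * ((1:ℝ) + 1) ^ p - (1:ℝ) ^ p ≤ 2 := by
    rw [Real.one_rpow]
    have : ((1:ℝ) + 1) = 2 := by norm_num
    rw [this]; linarith
  calc 2 * (1 + t) ^ p - t ^ p ≤ max (2 * ((1:ℝ) + 0) ^ p - (0:ℝ) ^ p)
        (2 * ((1:ℝ) + 1) ^ p - (1:ℝ) ^ p) := this
    _ ≤ 2 := by rw [h0]; exact max_le le_rfl h1

theorem aitch_function_inequality (la lb : ℕ) (h : lb ≤ la) :
    2 * ((la + lb : ℕ) : ℝ) ^ (Real.logb 2 3 - 1) ≤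
      2 * (la : ℝ) ^ (Real.logb 2 3 - 1) + (lb : ℝ) ^ (Real.logb 2 3 - 1) := by
  set p := Real.logb 2 3 - 1 with hp
  have hlogb : (2:ℝ) ^ Real.logb 2 3 = 3 := Real.rpow_logb (by norm_num) (by norm_num) (by norm_num)
  have hp2 : (2:ℝ) ^ p ≤ 3 / 2 := by
    rw [hp, Real.rpow_sub (by norm_num), hlogb, Real.rpow_one]
  have hp0 : 0 < p := by
    have : (1:ℝ) < Real.logb 2 3 := by
      rw [show (1:ℝ) = Real.logb 2 2 by simp]
      exact Real.logb_lt_logb (by norm_num) (by norm_num) (by norm_num)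
    simp [hp]; linarith
  have hp1 : p ≤ 1 := by
    have h34 : Real.logb 2 3 ≤ Real.logb 2 4 :=
      Real.logb_le_logb_of_le (by norm_num) (by norm_num) (by norm_num)
    have h4 : Real.logb 2 4 = 2 := by
      rw [show (4:ℝ) = (2:ℝ)^(2:ℝ) by norm_num]
      exact Real.logb_rpow (by norm_num) (by norm_num)
    rw [hp]; linarith
  rcases Nat.eq_zero_or_pos la with hla | hla
  · have hlb : lb = 0 := Nat.le_zero.mp (hla ▸ h)
    subst hla; subst hlb
    simp [Real.zero_rpow hp0.ne']
  · have ha : (0:ℝ) < la := by exact_mod_cast hla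
    have hb : (0:ℝ) ≤ lb := Nat.cast_nonneg lb
    have hba : (lb:ℝ) ≤ la := by exact_mod_cast h
    set t : ℝ := lb / la with htd
    have ht : t ∈ Icc (0:ℝ) 1 := ⟨by positivity, by rw [htd, div_le_one ha]; exact hba⟩
    have key := g_le hp0 hp1 hp2 ht
    have hmul : (la:ℝ) ^ p * (2 * (1 + t) ^ p - t ^ p) ≤ (la:ℝ) ^ p * 2 :=
      mul_le_mul_of_nonneg_left key (by positivity)
    have e1 : (la:ℝ) * (1 + t) = la + lb := by
      rw [htd]; field_simp
    have e2 : (la:ℝ) * t = lb := by rw [htd]; field_simp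
    have e3 : (la:ℝ) ^ p * (1 + t) ^ p = ((la:ℝ) + lb) ^ p := by
      rw [← Real.mul_rpow ha.le (by linarith [ht.1] : (0:ℝ) ≤ 1 + t), e1]
    have e4 : (la:ℝ) ^ p * t ^ p = (lb:ℝ) ^ p := by
      rw [← Real.mul_rpow ha.le ht.1, e2]
    push_cast
    nlinarith [hmul, e3, e4]
end

section
/- The exponent log 3 − 1 is maximal for the aitch-function inequality: for every real τ with τ > log 3 − 1, there exist nonnegative integers ℓ_a ≥ ℓ_b with ℓ = ℓ_a + ℓ_b such that 2·ℓ_a^τ + ℓ_b^τ < 2·ℓ^τ. -/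
/-!
Statement 15: The exponent log 3 − 1 (base-2 logarithm) is maximal for the aitch-function
inequality: for every real τ with τ > log 3 − 1, there exist nonnegative integers ℓ_a ≥ ℓ_b
such that, with ℓ = ℓ_a + ℓ_b, one has 2·ℓ_a^τ + ℓ_b^τ < 2·ℓ^τ (real powers; 0^τ = 0 for τ > 0).
-/

theorem aitch_exponent_maximal (τ : ℝ) (hτ : Real.logb 2 3 - 1 < τ) :
    ∃ la lb : ℕ, lb ≤ la ∧
      2 * (la : ℝ) ^ τ + (lb : ℝ) ^ τ < 2 * ((la + lb : ℕ) : ℝ) ^ τ := by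
  refine ⟨1, 1, le_refl _, ?_⟩
  have h1 : ((1:ℕ):ℝ) ^ τ = 1 := by norm_num
  have h2 : (((1+1:ℕ)):ℝ) = 2 := by norm_num
  rw [h1, h2]
  have key : (3:ℝ) < 2 ^ (1 + τ) := by
    have : (3:ℝ) = 2 ^ Real.logb 2 3 := by
      rw [Real.rpow_logb (by norm_num) (by norm_num) (by norm_num)]
    rw [this]
    exact Real.rpow_lt_rpow_left_iff (by norm_num) |>.mpr (by linarith)
  have : (2:ℝ) ^ (1 + τ) = 2 * 2 ^ τ := by
    rw [Real.rpow_add (by norm_num), Real.rpow_one]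
  linarith
end

section
/- For every positive integer k, the minimum of |{x + y : x ∈ {0,1}^k, y ∈ L}| over all two-element subsets L ⊆ {0,1,2}^k equals 3 · 2^(k−1). -/
/-!
Statement 19: For every positive integer k, the minimum of |{x + y : x ∈ {0,1}^k, y ∈ L}| over
all two-element subsets L ⊆ {0,1,2}^k equals 3 · 2^(k−1). Here x + y is the componentwise
integer sum.
-/

/-- The componentwise integer sum of a binary vector and a ternary vector. -/
def vsum23 {k : ℕ} (x : Fin k → Fin 2) (y : Fin k → Fin 3) : Fin k → ℕ :=
  fun i => (x i : ℕ) + (y i : ℕ)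

/-- The sumset `{0,1}^k + L` for `L ⊆ {0,1,2}^k`. -/
def sumSet23 {k : ℕ} (L : Finset (Fin k → Fin 3)) : Finset (Fin k → ℕ) :=
  ((Finset.univ : Finset (Fin k → Fin 2)) ×ˢ L).image fun p => vsum23 p.1 p.2

open Finset

lemma vsum23_inj {k : ℕ} (a : Fin k → Fin 3) :
    Function.Injective fun x : Fin k → Fin 2 => vsum23 x a := by
  intro x y h
  funext i
  have := congrFun h i
  simp only [vsum23] at this
  exact Fin.ext (by omega)

lemma mem_cube {k : ℕ} (a : Fin k → Fin 3) (z : Fin k → ℕ) :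
    z ∈ (Finset.univ.image fun x : Fin k → Fin 2 => vsum23 x a) ↔
      ∀ i, (a i : ℕ) ≤ z i ∧ z i ≤ (a i : ℕ) + 1 := by
  simp only [Finset.mem_image, Finset.mem_univ, true_and]
  constructor
  · rintro ⟨x, rfl⟩ i
    have := (x i).is_lt
    simp only [vsum23]
    omega
  · intro h
    have hlt : ∀ i, z i - (a i : ℕ) < 2 := fun i => by have := h i; omega
    refine ⟨fun i => ⟨z i - (a i : ℕ), hlt i⟩, ?_⟩
    funext i
    simp only [vsum23]
    have := h i
    omega

lemma cube_card {k : ℕ} (a : Fin k → Fin 3) :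
    (Finset.univ.image fun x : Fin k → Fin 2 => vsum23 x a).card = 2 ^ k := by
  rw [Finset.card_image_of_injective _ (vsum23_inj a), Finset.card_univ]
  simp

lemma sumSet_pair {k : ℕ} (a b : Fin k → Fin 3) :
    sumSet23 {a, b} = (Finset.univ.image fun x : Fin k → Fin 2 => vsum23 x a)
      ∪ (Finset.univ.image fun x : Fin k → Fin 2 => vsum23 x b) := by
  ext z
  simp only [sumSet23, Finset.mem_image, Finset.mem_product, Finset.mem_univ, true_and,
    Finset.mem_insert, Finset.mem_singleton, Finset.mem_union, Prod.exists]
  constructor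
  · rintro ⟨x, y, ⟨rfl | rfl, rfl⟩⟩
    · exact Or.inl ⟨x, rfl⟩
    · exact Or.inr ⟨x, rfl⟩
  · rintro (⟨x, rfl⟩ | ⟨x, rfl⟩)
    · exact ⟨x, a, ⟨Or.inl rfl, rfl⟩⟩
    · exact ⟨x, b, ⟨Or.inr rfl, rfl⟩⟩

lemma lower_bound {k : ℕ} (a b : Fin k → Fin 3) (hab : a ≠ b) :
    3 * 2 ^ (k - 1) ≤ (sumSet23 {a, b}).card := by
  obtain ⟨i0, hi0⟩ := Function.ne_iff.mp hab
  have hvne : (a i0 : ℕ) ≠ (b i0 : ℕ) := fun h => hi0 (Fin.ext h)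
  set c : Fin 2 := if (b i0 : ℕ) < (a i0 : ℕ) then 0 else 1 with hc
  set A := (Finset.univ.image fun x : Fin k → Fin 2 => vsum23 x a) with hA
  set S := ((Finset.univ.filter fun x : Fin k → Fin 2 => x i0 = c).image
      fun x => vsum23 x b) with hS
  have hSB : S ⊆ (Finset.univ.image fun x : Fin k → Fin 2 => vsum23 x b) :=
    Finset.image_subset_image (Finset.filter_subset _ _)
  have hScard : S.card = 2 ^ (k - 1) := by
    rw [hS, Finset.card_image_of_injective _ (vsum23_inj b)]
    have := Fintype.card_filter_piFinset_const_eq_of_mem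
      (Finset.univ : Finset (Fin 2)) i0 (Finset.mem_univ c)
    simpa using this
  have hdisj : Disjoint A S := by
    rw [Finset.disjoint_right]
    intro z hzS hzA
    rw [hA, mem_cube] at hzA
    rw [hS, Finset.mem_image] at hzS
    obtain ⟨x, hx, rfl⟩ := hzS
    rw [Finset.mem_filter] at hx
    have hxc : x i0 = c := hx.2
    have hzi : vsum23 x b i0 = (x i0 : ℕ) + (b i0 : ℕ) := rfl
    have := hzA i0
    by_cases h : (b i0 : ℕ) < (a i0 : ℕ)
    · have : x i0 = (0 : Fin 2) := by rw [hxc, hc, if_pos h]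
      rw [this] at hzi
      simp at hzi
      omega
    · have : x i0 = (1 : Fin 2) := by rw [hxc, hc, if_neg h]
      rw [this] at hzi
      simp at hzi
      omega
  have hkpos : 0 < k := i0.pos
  have h1 : 2 ^ k = 2 ^ (k - 1) * 2 := by
    rw [← pow_succ]; congr 1; omega
  calc 3 * 2 ^ (k - 1) = 2 ^ k + 2 ^ (k - 1) := by rw [h1]; ring
    _ = (A ∪ S).card := by
        rw [Finset.card_union_of_disjoint hdisj, cube_card, hScard]
    _ ≤ (sumSet23 {a, b}).card := by
        apply Finset.card_le_card
        rw [sumSet_pair]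
        exact Finset.union_subset_union (le_refl A) hSB

theorem min_sumset_two_element (k : ℕ) (hk : 0 < k) :
    IsLeast {n : ℕ | ∃ L : Finset (Fin k → Fin 3), L.card = 2 ∧ n = (sumSet23 L).card}
      (3 * 2 ^ (k - 1)) := by
  constructor
  · -- membership: exhibit an L achieving the bound
    set i0 : Fin k := ⟨0, hk⟩ with hi0
    set b0 : Fin k → Fin 3 := fun _ => 0 with hb0
    set b1 : Fin k → Fin 3 := fun i => if i = i0 then 1 else 0 with hb1
    have hne : b0 ≠ b1 := by
      intro h
      have := congrFun h i0
      simp [hb0, hb1] at this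
    refine ⟨{b0, b1}, ?_, ?_⟩
    · rw [Finset.card_insert_of_notMem (by simpa using hne), Finset.card_singleton]
    · set T : Fin k → Finset ℕ := fun i => Finset.range (if i = i0 then 3 else 2) with hT
      have hset : sumSet23 {b0, b1} = Fintype.piFinset T := by
        ext z
        rw [sumSet_pair, Fintype.mem_piFinset]
        simp only [Finset.mem_union, mem_cube, hT, Finset.mem_range]
        constructor
        · rintro (h | h) i
          · have := h i
            simp only [hb0, Fin.val_zero] at this
            split <;> omega
          · have := h i
            simp only [hb1, apply_ite Fin.val, Fin.val_one, Fin.val_zero] at this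
            split at this <;> split <;> omega
        · intro h
          by_cases hz : z i0 ≤ 1
          · left
            intro i
            have := h i
            simp only [hb0, Fin.val_zero]
            by_cases hii : i = i0
            · subst hii; omega
            · rw [if_neg hii] at this; omega
          · right
            intro i
            have := h i
            have h0 := h i0
            rw [if_pos rfl] at h0
            simp only [hb1, apply_ite Fin.val, Fin.val_one, Fin.val_zero]
            by_cases hii : i = i0
            · subst hii; rw [if_pos rfl]; omega
            · rw [if_neg hii] at this ⊢; omega
      rw [hset, Fintype.card_piFinset]
      symm
      have : ∀ i, (T i).card = if i = i0 then 3 else 2 := by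
        intro i; rw [hT]; simp [Finset.card_range]
      calc (∏ i, (T i).card) = ∏ i, (if i = i0 then 3 else 2) :=
            Finset.prod_congr rfl (fun i _ => this i)
        _ = 3 * 2 ^ (k - 1) := by
            rw [← Finset.mul_prod_erase Finset.univ _ (Finset.mem_univ i0), if_pos rfl]
            congr 1
            rw [Finset.prod_congr rfl (fun j hj => if_neg (Finset.mem_erase.mp hj).1),
              Finset.prod_const, Finset.card_erase_of_mem (Finset.mem_univ i0),
              Finset.card_univ, Fintype.card_fin]
  · -- lower bound
    rintro n ⟨L, hL, rfl⟩
    obtain ⟨a, b, hab, rfl⟩ := Finset.card_eq_two.mp hL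
    exact lower_bound a b hab
end
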